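/- arXiv:2101.01089 — 2 statements merged into one kernel-verified Lean document; each statement's English description precedes it below -/
import Mathlib

section
/- Let α ∈ (0,1) be fixed and let 0 < C, D < 1 with C + D < 3/4. Then for all sufficiently large positive integers B there exist integers r, b with gcd(r,b) = 1, B < b ≤ 2B, 0 < r < b, α ≤ r/b ≤ α + B^{-C}, and |r̄| ≤ B^{-D}·b, where r̄ denotes the unique integer with |r̄| ≤ b/2 and r·r̄ ≡ 1 (mod b). -/
open Real Filter

theorem stmt13 (α C D : ℝ) (hα : α ∈ Set.Ioo (0 : ℝ) 1)
    (hC0 : 0 < C) (hC1 : C < 1) (hD0 : 0 < D) (hD1 : D < 1) (hCD : C + D < 3 / 4) :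
    ∀ᶠ B : ℕ in atTop, ∃ r b : ℕ, Nat.Coprime r b ∧
      B < b ∧ b ≤ 2 * B ∧ 0 < r ∧ r < b ∧
      α ≤ (r : ℝ) / b ∧ (r : ℝ) / b ≤ α + (B : ℝ) ^ (-C) ∧
      ∃ rbar : ℤ, (r : ℤ) * rbar ≡ 1 [ZMOD (b : ℤ)] ∧
        -((b : ℝ) / 2) < (rbar : ℝ) ∧ (rbar : ℝ) ≤ (b : ℝ) / 2 ∧
        |(rbar : ℝ)| ≤ (B : ℝ) ^ (-D) * b := by
  obtain ⟨hα0, hα1⟩ := hα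
  have hcast : Tendsto (fun B : ℕ => (B : ℝ)) atTop atTop := tendsto_natCast_atTop_atTop
  have h1 : ∀ᶠ B : ℕ in atTop, (32 : ℝ) ≤ (B : ℝ) ^ (1 - C - D) :=
    ((tendsto_rpow_atTop (by linarith : (0:ℝ) < 1 - C - D)).comp hcast).eventually_ge_atTop 32
  have h2 : ∀ᶠ B : ℕ in atTop, (B : ℝ) ^ (-C) < (1 - α) / 2 :=
    ((tendsto_rpow_neg_atTop hC0).comp hcast).eventually_lt_const (by linarith)
  have h3 : ∀ᶠ B : ℕ in atTop, (8 : ℝ) ≤ (B : ℝ) ^ (1 - D) :=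
    ((tendsto_rpow_atTop (by linarith : (0:ℝ) < 1 - D)).comp hcast).eventually_ge_atTop 8
  filter_upwards [h1, h2, h3, eventually_ge_atTop 10] with B h32 hδα hS8 hB10
  have hB0 : (0 : ℝ) < B := by
    have : (10:ℝ) ≤ (B:ℝ) := by exact_mod_cast hB10
    linarith
  have hB1 : (1 : ℝ) ≤ B := by
    have : (10:ℝ) ≤ (B:ℝ) := by exact_mod_cast hB10
    linarith
  have hδpos : (0 : ℝ) < (B : ℝ) ^ (-C) := Real.rpow_pos_of_pos hB0 _
  have hδ1 : (B : ℝ) ^ (-C) ≤ 1 :=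
    Real.rpow_le_one_of_one_le_of_nonpos hB1 (by linarith)
  have hSpos : (0 : ℝ) < (B : ℝ) ^ (1 - D) := Real.rpow_pos_of_pos hB0 _
  have hSB : (B : ℝ) ^ (1 - D) ≤ B := by
    have := Real.rpow_le_rpow_of_exponent_le hB1 (by linarith : 1 - D ≤ 1)
    rwa [Real.rpow_one] at this
  have hSδ : (B : ℝ) ^ (1 - D) * (B : ℝ) ^ (-C) = (B : ℝ) ^ (1 - C - D) := by
    rw [← Real.rpow_add hB0]; ring_nf
  -- the natural number M ≈ B^(1-D)
  set M := Nat.floor ((B : ℝ) ^ (1 - D)) with hM_def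
  have hM8 : 8 ≤ M := Nat.le_floor (by exact_mod_cast hS8)
  have hMS : (M : ℝ) ≤ (B : ℝ) ^ (1 - D) := Nat.floor_le hSpos.le
  have hMS' : (B : ℝ) ^ (1 - D) - 1 < M := Nat.sub_one_lt_floor _
  set n := M / 2 with hn_def
  have hn2 : 2 ≤ n := by omega
  set j := Nat.log 2 n with hj_def
  have hj1 : 1 ≤ j := Nat.log_pos one_lt_two hn2
  set s := 2 ^ j with hs_def
  have hsn : s ≤ n := Nat.pow_log_le_self 2 (by omega)
  have hns : n < 2 * s := by
    have h := Nat.lt_pow_succ_log_self (by norm_num : 1 < 2) n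
    rw [pow_succ, ← hj_def, ← hs_def] at h
    omega
  have hs2 : 2 ≤ s := by
    calc 2 = 2 ^ 1 := rfl
    _ ≤ 2 ^ j := Nat.pow_le_pow_right (by norm_num) hj1
  have hs0 : 0 < s := by omega
  have hsR0 : (0 : ℝ) < s := by exact_mod_cast hs0
  -- real bounds on s
  have hsM : 2 * s ≤ M := by omega
  have hsup : (s : ℝ) ≤ (B : ℝ) ^ (1 - D) / 2 := by
    have : ((2 * s : ℕ) : ℝ) ≤ (M : ℝ) := by exact_mod_cast hsM
    push_cast at this
    linarith
  have hM4s : M ≤ 4 * s - 1 := by omega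
  have hslow : (B : ℝ) ^ (1 - D) / 4 < s := by
    have h4n : M + 1 ≤ 4 * s := by omega
    have h4 : (M : ℝ) + 1 ≤ 4 * (s : ℝ) := by exact_mod_cast h4n
    linarith
  have hsδ4 : 4 ≤ (s : ℝ) * (B : ℝ) ^ (-C) := by
    have h5 : (B : ℝ) ^ (1 - D) / 4 * (B : ℝ) ^ (-C) ≤ (s : ℝ) * (B : ℝ) ^ (-C) :=
      mul_le_mul_of_nonneg_right hslow.le hδpos.le
    have h6 : (B : ℝ) ^ (1 - D) / 4 * (B : ℝ) ^ (-C) = (B : ℝ) ^ (1 - C - D) / 4 := by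
      rw [div_mul_eq_mul_div, hSδ]
    linarith
  -- choose m
  set t := Nat.ceil ((s : ℝ) * α) with ht_def
  obtain ⟨m, hm_def⟩ : ∃ m, m = 2 * (t / 2) + 3 := ⟨_, rfl⟩
  have hmt1 : t + 2 ≤ m := by omega
  have hmt2 : m ≤ t + 3 := by omega
  have hceil1 : (s : ℝ) * α ≤ t := Nat.le_ceil _
  have hceil2 : (t : ℝ) < (s : ℝ) * α + 1 :=
    Nat.ceil_lt_add_one (by positivity)
  have hm_low : (s : ℝ) * α + 2 ≤ m := by
    have : ((t + 2 : ℕ) : ℝ) ≤ (m : ℝ) := by exact_mod_cast hmt1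
    push_cast at this
    linarith
  have hm_up : (m : ℝ) ≤ (s : ℝ) * α + 4 := by
    have : (m : ℝ) ≤ ((t + 3 : ℕ) : ℝ) := by exact_mod_cast hmt2
    push_cast at this
    linarith
  have hm_odd : Odd m := by
    refine Nat.odd_iff.mpr ?_
    omega
  have hcop : Nat.Coprime m s := (hm_odd.coprime_two_right).pow_right j
  have hm3 : 3 ≤ m := by omega
  -- choose the residue and b
  obtain ⟨u, -, hu⟩ := Nat.exists_mul_mod_eq_one_of_coprime hcop (by omega : 1 < s)
  obtain ⟨w, hw_def⟩ : ∃ w, w = u % s := ⟨_, rfl⟩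
  obtain ⟨b, hb_def⟩ : ∃ b, b = w + s * (B / s + 1) := ⟨_, rfl⟩
  have hwlt : w < s := hw_def ▸ Nat.mod_lt u hs0
  have h2sB : 2 * s ≤ B := by
    have hr1 : ((2 * s : ℕ) : ℝ) ≤ (B : ℝ) := by
      push_cast
      linarith
    exact_mod_cast hr1
  have key : s * (B / s) + B % s = B := Nat.div_add_mod B s
  have hmodlt : B % s < s := Nat.mod_lt B hs0
  have hb_eq : b = w + (s * (B / s) + s) := by rw [hb_def]; ring
  obtain ⟨X, hXe⟩ : ∃ X, s * (B / s) = X := ⟨_, rfl⟩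
  rw [hXe] at key hb_eq
  have hbB : B < b := by omega
  have hb2B : b ≤ 2 * B := by omega
  have hbpos : (0 : ℝ) < b := by
    have : 0 < b := by omega
    exact_mod_cast this
  have hbB_R : (B : ℝ) < b := by exact_mod_cast hbB
  have hb2B_R : (b : ℝ) ≤ 2 * B := by exact_mod_cast hb2B
  -- the congruence m * b ≡ 1 mod s, and r
  have hmb : m * b % s = 1 := by
    have e1 : m * b = m * w + s * (m * (B / s + 1)) := by rw [hb_def]; ring
    rw [e1, Nat.add_mul_mod_self_left]
    calc m * w % s = m * u % s := by rw [hw_def]; exact Nat.ModEq.mul_left m (Nat.mod_modEq u s)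
    _ = 1 := hu
  obtain ⟨r, hr_def⟩ : ∃ r, r = m * b / s := ⟨_, rfl⟩
  have hr : s * r + 1 = m * b := by
    have h := Nat.div_add_mod (m * b) s
    rw [hmb, ← hr_def] at h
    exact h
  have hr_real : (s : ℝ) * r + 1 = (m : ℝ) * b := by exact_mod_cast hr
  -- main inequalities
  have hb1R : (1 : ℝ) ≤ b := by
    have : 1 ≤ b := by omega
    exact_mod_cast this
  have hA : α ≤ (r : ℝ) / b := by
    rw [le_div_iff₀ hbpos]
    have key0 := mul_le_mul_of_nonneg_right hm_low hbpos.le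
    have e1 : ((s : ℝ) * α + 2) * b = (s : ℝ) * α * b + 2 * b := by ring
    have e2 : (s : ℝ) * (α * b) = (s : ℝ) * α * b := by ring
    have : (s : ℝ) * (α * b) ≤ (s : ℝ) * r := by linarith
    exact le_of_mul_le_mul_left this hsR0
  have hm_up2 : (m : ℝ) ≤ (s : ℝ) * α + (s : ℝ) * (B : ℝ) ^ (-C) := by linarith
  have hB_ineq : (r : ℝ) / b ≤ α + (B : ℝ) ^ (-C) := by
    rw [div_le_iff₀ hbpos]
    have key2 : (m : ℝ) * b ≤ ((s : ℝ) * α + (s : ℝ) * (B : ℝ) ^ (-C)) * b :=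
      mul_le_mul_of_nonneg_right hm_up2 hbpos.le
    have e3 : (s : ℝ) * ((α + (B : ℝ) ^ (-C)) * b) = ((s : ℝ) * α + (s : ℝ) * (B : ℝ) ^ (-C)) * b := by
      ring
    have : (s : ℝ) * r ≤ (s : ℝ) * ((α + (B : ℝ) ^ (-C)) * b) := by linarith
    exact le_of_mul_le_mul_left this hsR0
  have hrb_lt1 : (r : ℝ) / b < 1 := by
    have : α + (B : ℝ) ^ (-C) < 1 := by linarith
    linarith
  have hrb : r < b := by
    have : (r : ℝ) < b := by
      rw [div_lt_one hbpos] at hrb_lt1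
      exact hrb_lt1
    exact_mod_cast this
  have hr0 : 0 < r := by
    have : (0 : ℝ) < r := by
      have h0 : (0 : ℝ) < α * b := by positivity
      rw [le_div_iff₀ hbpos] at hA
      linarith
    exact_mod_cast this
  have hcop_rb : Nat.Coprime r b := by
    have hd : Nat.gcd r b ∣ 1 := by
      have h1 : Nat.gcd r b ∣ m * b - s * r := by
        exact Nat.dvd_sub (Dvd.dvd.mul_left (Nat.gcd_dvd_right r b) m)
          (Dvd.dvd.mul_left (Nat.gcd_dvd_left r b) s)
      have : m * b - s * r = 1 := by omega
      rwa [this] at h1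
    exact Nat.dvd_one.mp hd
  refine ⟨r, b, hcop_rb, hbB, hb2B, hr0, hrb, hA, hB_ineq, -(s : ℤ), ?_, ?_, ?_, ?_⟩
  · -- r * (-s) ≡ 1 [ZMOD b]
    rw [Int.ModEq]
    have : ((b : ℤ)) ∣ 1 - (r : ℤ) * (-(s : ℤ)) := by
      refine ⟨(m : ℤ), ?_⟩
      have : (s : ℤ) * r + 1 = (m : ℤ) * b := by exact_mod_cast hr
      linarith
    have h := Int.modEq_iff_dvd.mpr this
    exact h
  · -- -(b/2) < -s
    push_cast
    have hsB2 : (s : ℝ) * 2 ≤ B := by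
      have : ((2 * s : ℕ) : ℝ) ≤ (B : ℝ) := by exact_mod_cast h2sB
      push_cast at this
      linarith
    linarith
  · push_cast
    linarith
  · push_cast
    rw [abs_neg, abs_of_nonneg (by positivity : (0:ℝ) ≤ (s:ℝ))]
    have h7 : (B : ℝ) ^ (-D) * B = (B : ℝ) ^ (1 - D) := by
      nth_rewrite 2 [← Real.rpow_one (B : ℝ)]
      rw [← Real.rpow_add hB0]
      ring_nf
    have h8 : (B : ℝ) ^ (-D) * B ≤ (B : ℝ) ^ (-D) * b :=
      mul_le_mul_of_nonneg_left hbB_R.le (Real.rpow_nonneg hB0.le _)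
    linarith
end

section
/- Let β ∈ ℝ and 0 < Δ < 1. Define χ_1(u,v) := 1 if β + v < u ≤ β + Δ - v and χ_1(u,v) := 0 otherwise, and χ_2(u) := Δ^{-1} ∫_0^Δ χ_1(u,v) dv. Let a(n) := ∫_β^{β+1} χ_2(u) e(-n u) du denote the Fourier coefficients of the 1-periodic extension of χ_2. Then a(0) = Δ/4, and there is an absolute constant C > 0 such that |a(n)| ≤ C·Δ for all integers n with 0 < |n| ≤ Δ^{-1}, and |a(n)| ≤ C·Δ^{-1}·n^{-2} for all integers n with |n| > Δ^{-1}. Moreover χ_2(u) = ∑_{n=-∞}^{∞} a(n) e(n u) for all u with β < u < β + Δ. -/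
open Real MeasureTheory
open scoped Classical

/-- `χ₁(u,v) = 1` if `β + v < u ≤ β + Δ - v`, and `0` otherwise. -/
noncomputable def chi1 (β Δ u v : ℝ) : ℝ :=
  if β + v < u ∧ u ≤ β + Δ - v then 1 else 0

/-- `χ₂(u) = Δ⁻¹ ∫_0^Δ χ₁(u,v) dv`. -/
noncomputable def chi2 (β Δ u : ℝ) : ℝ :=
  Δ⁻¹ * ∫ v in (0 : ℝ)..Δ, chi1 β Δ u v

/-- The `n`-th Fourier coefficient `a(n) = ∫_β^{β+1} χ₂(u) e(-nu) du` of the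
1-periodic extension of `χ₂`. -/
noncomputable def fcoef (β Δ : ℝ) (n : ℤ) : ℂ :=
  ∫ u in β..(β + 1), (chi2 β Δ u : ℂ) *
    Complex.exp (-(2 * Real.pi * Complex.I * n * u))

lemma chi2_eq {β Δ : ℝ} (hΔ : 0 < Δ) (u : ℝ) :
    chi2 β Δ u = Δ⁻¹ * max 0 (min (u - β) (β + Δ - u)) := by
  have h1 : ∀ v : ℝ, chi1 β Δ u v =
      (Set.Iio (u - β) ∩ Set.Iic (β + Δ - u)).indicator (fun _ => (1:ℝ)) v := by
    intro v
    simp only [chi1, Set.indicator_apply, Set.mem_inter_iff, Set.mem_Iio, Set.mem_Iic]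
    congr 1
    exact propext (by constructor <;> rintro ⟨h1, h2⟩ <;> exact ⟨by linarith, by linarith⟩)
  have hmeas : MeasurableSet (Set.Iio (u - β) ∩ Set.Iic (β + Δ - u)) :=
    measurableSet_Iio.inter measurableSet_Iic
  rw [chi2]
  congr 1
  rw [intervalIntegral.integral_of_le hΔ.le]
  simp_rw [h1]
  rw [setIntegral_indicator hmeas, setIntegral_const, smul_eq_mul, mul_one]
  rcases le_or_gt (u - β) (β + Δ - u) with h | h
  · have hS : Set.Ioc 0 Δ ∩ (Set.Iio (u - β) ∩ Set.Iic (β + Δ - u)) = Set.Ioo 0 (u - β) := by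
      ext v
      simp only [Set.mem_inter_iff, Set.mem_Iio, Set.mem_Iic, Set.mem_Ioc, Set.mem_Ioo]
      constructor
      · rintro ⟨⟨c, d⟩, a, b⟩; exact ⟨c, a⟩
      · rintro ⟨a, b⟩; exact ⟨⟨a, by linarith⟩, b, by linarith⟩
    rw [hS, Real.volume_real_Ioo, min_eq_left h, sub_zero, max_comm]
  · have hS : Set.Ioc 0 Δ ∩ (Set.Iio (u - β) ∩ Set.Iic (β + Δ - u)) = Set.Ioc 0 (β + Δ - u) := by
      ext v
      simp only [Set.mem_inter_iff, Set.mem_Iio, Set.mem_Iic, Set.mem_Ioc]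
      constructor
      · rintro ⟨⟨c, d⟩, a, b⟩; exact ⟨c, b⟩
      · rintro ⟨a, b⟩; exact ⟨⟨a, by linarith⟩, by linarith, b⟩
    rw [hS, Real.volume_real_Ioc, sub_zero, min_eq_right h.le, max_comm]

lemma chi2_cont {β Δ : ℝ} (hΔ : 0 < Δ) : Continuous (chi2 β Δ) := by
  have : chi2 β Δ = fun u => Δ⁻¹ * max 0 (min (u - β) (β + Δ - u)) :=
    funext (chi2_eq hΔ)
  rw [this]; fun_prop

lemma chi2_nonneg {β Δ : ℝ} (hΔ : 0 < Δ) (u : ℝ) : 0 ≤ chi2 β Δ u := by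
  rw [chi2_eq hΔ]
  exact mul_nonneg (by positivity) (le_max_left _ _)

lemma tent_integrable {β Δ : ℝ} (hΔ : 0 < Δ) (a b : ℝ) :
    IntervalIntegrable (fun u => max 0 (min (u - β) (β + Δ - u))) volume a b := by
  apply Continuous.intervalIntegrable; fun_prop

lemma chi2_integral {β Δ : ℝ} (hΔ : 0 < Δ) (hΔ1 : Δ < 1) :
    ∫ u in β..(β + 1), chi2 β Δ u = Δ / 4 := by
  have hc := chi2_eq (β := β) hΔ
  simp_rw [hc]
  rw [intervalIntegral.integral_const_mul]
  have e1 : ∫ u in β..(β + Δ/2), max 0 (min (u - β) (β + Δ - u)) = Δ^2/8 := by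
    rw [intervalIntegral.integral_congr (g := fun u => u - β) ?_]
    · rw [intervalIntegral.integral_sub (intervalIntegral.intervalIntegrable_id) (intervalIntegrable_const),
        integral_id, intervalIntegral.integral_const]
      simp [smul_eq_mul]; ring
    · intro u hu
      rw [Set.uIcc_of_le (by linarith)] at hu
      obtain ⟨h1, h2⟩ := hu
      simp only
      rw [min_eq_left (by linarith), max_eq_right (by linarith)]
  have e2 : ∫ u in (β + Δ/2)..(β + Δ), max 0 (min (u - β) (β + Δ - u)) = Δ^2/8 := by
    rw [intervalIntegral.integral_congr (g := fun u => β + Δ - u) ?_]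
    · rw [show (fun u : ℝ => β + Δ - u) = fun u : ℝ => (β + Δ) - u from rfl]
      rw [intervalIntegral.integral_sub (intervalIntegrable_const) (intervalIntegral.intervalIntegrable_id),
        integral_id, intervalIntegral.integral_const]
      simp [smul_eq_mul]; ring
    · intro u hu
      rw [Set.uIcc_of_le (by linarith)] at hu
      obtain ⟨h1, h2⟩ := hu
      simp only
      rw [min_eq_right (by linarith), max_eq_right (by linarith)]
  have e3 : ∫ u in (β + Δ)..(β + 1), max 0 (min (u - β) (β + Δ - u)) = 0 := by
    rw [intervalIntegral.integral_congr (g := fun _ => (0:ℝ)) ?_]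
    · simp
    · intro u hu
      rw [Set.uIcc_of_le (by linarith)] at hu
      obtain ⟨h1, h2⟩ := hu
      simp only
      rw [max_eq_left (le_trans (min_le_right _ _) (by linarith))]
  have split1 := intervalIntegral.integral_add_adjacent_intervals
    (tent_integrable (β := β) hΔ β (β + Δ/2)) (tent_integrable (β := β) hΔ (β + Δ/2) (β + Δ))
  have split2 := intervalIntegral.integral_add_adjacent_intervals
    (tent_integrable (β := β) hΔ β (β + Δ)) (tent_integrable (β := β) hΔ (β + Δ) (β + 1))
  rw [← split2, ← split1, e1, e2, e3]
  field_simp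
  ring

lemma key_deriv (c r : ℂ) (hc : c ≠ 0) (u : ℝ) :
    HasDerivAt (fun u : ℝ => (((u:ℂ) - r)/c - 1/c^2) * Complex.exp (c*u))
      (((u:ℂ) - r) * Complex.exp (c*u)) u := by
  have h1 : HasDerivAt (fun u : ℝ => (u : ℂ)) 1 u := by
    simpa using (hasDerivAt_id u).ofReal_comp
  have g2 : HasDerivAt (fun u : ℝ => ((u:ℂ) - r)/c - 1/c^2) (1/c) u :=
    ((h1.sub_const r).div_const c).sub_const _
  have h2 : HasDerivAt (fun u : ℝ => Complex.exp (c*(u:ℂ))) (Complex.exp (c*u) * (c*1)) u :=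
    (h1.const_mul c).cexp
  have := (g2.mul h2 : HasDerivAt (fun u : ℝ => (((u:ℂ) - r)/c - 1/c^2) * Complex.exp (c*u)) _ u)
  refine this.congr_deriv ?_
  field_simp
  ring

lemma key_int (c r : ℂ) (hc : c ≠ 0) (a b : ℝ) :
    ∫ u in a..b, ((u:ℂ) - r) * Complex.exp (c*u)
      = (((b:ℂ) - r)/c - 1/c^2) * Complex.exp (c*b)
        - (((a:ℂ) - r)/c - 1/c^2) * Complex.exp (c*a) := by
  refine intervalIntegral.integral_eq_sub_of_hasDerivAt
    (fun u _ => key_deriv c r hc u) ?_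
  apply Continuous.intervalIntegrable
  have : Continuous fun u : ℝ => Complex.exp (c * u) := by
    exact Complex.continuous_exp.comp (by fun_prop)
  fun_prop

lemma fcoef_eq {β Δ : ℝ} (hΔ : 0 < Δ) (hΔ1 : Δ < 1) {n : ℤ} (hn : n ≠ 0) :
    fcoef β Δ n = (Δ⁻¹ : ℂ) * (Complex.exp (-(2*Real.pi*Complex.I*n) * β) *
      (Complex.exp (-(2*Real.pi*Complex.I*n) * (Δ/2)) - 1)^2 / (-(2*Real.pi*Complex.I*n))^2) := by
  set c : ℂ := -(2*Real.pi*Complex.I*n) with hcdef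
  have hc : c ≠ 0 := by
    simp only [hcdef, neg_ne_zero]
    apply mul_ne_zero
    apply mul_ne_zero
    · exact mul_ne_zero two_ne_zero (by exact_mod_cast Real.pi_ne_zero)
    · exact Complex.I_ne_zero
    · exact_mod_cast hn
  have harg : ∀ u : ℝ, -(2*(Real.pi:ℂ)*Complex.I*n*u) = c * u := fun u => by
    rw [hcdef]; ring
  have hint : ∀ a b : ℝ, IntervalIntegrable
      (fun u : ℝ => (chi2 β Δ u : ℂ) * Complex.exp (c*u)) volume a b := by
    intro a b
    apply Continuous.intervalIntegrable
    have h1 : Continuous fun u : ℝ => ((chi2 β Δ u : ℝ) : ℂ) :=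
      Complex.continuous_ofReal.comp (chi2_cont hΔ)
    have h2 : Continuous fun u : ℝ => Complex.exp (c * u) :=
      Complex.continuous_exp.comp (by fun_prop)
    exact h1.mul h2
  have step0 : fcoef β Δ n = ∫ u in β..(β+1), (chi2 β Δ u : ℂ) * Complex.exp (c*u) := by
    rw [fcoef]
    congr 1
    funext u
    rw [harg u]
  rw [step0]
  have split1 := intervalIntegral.integral_add_adjacent_intervals
    (hint β (β + Δ/2)) (hint (β + Δ/2) (β + Δ))
  have split2 := intervalIntegral.integral_add_adjacent_intervals
    (hint β (β + Δ)) (hint (β + Δ) (β + 1))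
  rw [← split2, ← split1]
  have e1 : ∫ u in β..(β + Δ/2), (chi2 β Δ u : ℂ) * Complex.exp (c*u)
      = (Δ⁻¹:ℂ) * ∫ u in β..(β + Δ/2), ((u:ℂ) - (β:ℂ)) * Complex.exp (c*u) := by
    rw [← intervalIntegral.integral_const_mul]
    apply intervalIntegral.integral_congr
    intro u hu
    rw [Set.uIcc_of_le (by linarith)] at hu
    obtain ⟨h1, h2⟩ := hu
    simp only
    rw [chi2_eq hΔ, min_eq_left (by linarith), max_eq_right (by linarith)]
    push_cast
    ring
  have e2 : ∫ u in (β + Δ/2)..(β + Δ), (chi2 β Δ u : ℂ) * Complex.exp (c*u)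
      = -((Δ⁻¹:ℂ) * ∫ u in (β + Δ/2)..(β + Δ), ((u:ℂ) - ((β:ℂ)+(Δ:ℂ))) * Complex.exp (c*u)) := by
    rw [← intervalIntegral.integral_const_mul, ← intervalIntegral.integral_neg]
    apply intervalIntegral.integral_congr
    intro u hu
    rw [Set.uIcc_of_le (by linarith)] at hu
    obtain ⟨h1, h2⟩ := hu
    simp only
    rw [chi2_eq hΔ, min_eq_right (by linarith), max_eq_right (by linarith)]
    push_cast
    ring
  have e3 : ∫ u in (β + Δ)..(β + 1), (chi2 β Δ u : ℂ) * Complex.exp (c*u) = 0 := by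
    rw [show (0:ℂ) = ∫ u in (β + Δ)..(β + 1), (0:ℂ) by simp]
    apply intervalIntegral.integral_congr
    intro u hu
    rw [Set.uIcc_of_le (by linarith)] at hu
    obtain ⟨h1, h2⟩ := hu
    simp only
    rw [chi2_eq hΔ, max_eq_left (le_trans (min_le_right _ _) (by linarith))]
    push_cast
    ring
  rw [e1, e2, e3, key_int c _ hc, key_int c _ hc]
  have E2 : Complex.exp (c*((β:ℝ) + Δ/2 : ℝ)) = Complex.exp (c*β) * Complex.exp (c*(Δ/2)) := by
    rw [← Complex.exp_add]
    congr 1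
    push_cast
    ring
  have E3 : Complex.exp (c*((β:ℝ) + Δ : ℝ)) = Complex.exp (c*β) * Complex.exp (c*(Δ/2))^2 := by
    rw [sq, ← Complex.exp_add, ← Complex.exp_add]
    congr 1
    push_cast
    ring
  push_cast
  push_cast at E2 E3
  rw [E2, E3]
  have hΔ' : (Δ:ℂ) ≠ 0 := by exact_mod_cast hΔ.ne'
  clear_value c
  generalize Complex.exp (c*(β:ℂ)) = A
  generalize Complex.exp (c*((Δ:ℂ)/2)) = B
  field_simp
  have h6 : (↑Δ:ℂ) * c^5 * (↑Δ)⁻¹ * c⁻¹ ^ 5 = 1 := by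
    rw [inv_pow]
    field_simp
  linear_combination

lemma fcoef_zero {β Δ : ℝ} (hΔ : 0 < Δ) (hΔ1 : Δ < 1) :
    fcoef β Δ 0 = ((Δ / 4 : ℝ) : ℂ) := by
  rw [fcoef]
  simp only [Int.cast_zero, mul_zero, zero_mul, neg_zero, Complex.exp_zero, mul_one]
  rw [intervalIntegral.integral_ofReal, chi2_integral hΔ hΔ1]

lemma fcoef_bound1 {β Δ : ℝ} (hΔ : 0 < Δ) (hΔ1 : Δ < 1) (n : ℤ) :
    ‖fcoef β Δ n‖ ≤ Δ / 4 := by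
  have h := intervalIntegral.norm_integral_le_integral_norm (μ := volume)
    (f := fun u : ℝ => (chi2 β Δ u : ℂ) * Complex.exp (-(2 * Real.pi * Complex.I * n * u)))
    (a := β) (b := β + 1) (by linarith)
  rw [fcoef]
  refine le_trans h ?_
  have : ∀ u : ℝ, ‖(chi2 β Δ u : ℂ) * Complex.exp (-(2 * Real.pi * Complex.I * n * u))‖
      = chi2 β Δ u := by
    intro u
    have hre : (-(2 * (Real.pi:ℂ) * Complex.I * n * u)).re = 0 := by simp
    rw [norm_mul, Complex.norm_exp, hre, Real.exp_zero,
      mul_one, Complex.norm_real, Real.norm_eq_abs, abs_of_nonneg (chi2_nonneg hΔ u)]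
  simp_rw [this]
  rw [chi2_integral hΔ hΔ1]

lemma fcoef_bound2 {β Δ : ℝ} (hΔ : 0 < Δ) (hΔ1 : Δ < 1) {n : ℤ} (hn : n ≠ 0) :
    ‖fcoef β Δ n‖ ≤ Δ⁻¹ / (Real.pi^2 * (n:ℝ)^2) := by
  have hn' : (n:ℝ) ≠ 0 := by exact_mod_cast hn
  rw [fcoef_eq hΔ hΔ1 hn]
  rw [norm_mul, norm_div, norm_mul, norm_pow, norm_pow]
  have h1 : ‖((Δ:ℂ)⁻¹)‖ = Δ⁻¹ := by
    rw [norm_inv, Complex.norm_real, Real.norm_eq_abs, abs_of_pos hΔ]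
  have h2 : ‖Complex.exp (-(2*Real.pi*Complex.I*n) * β)‖ = 1 := by
    rw [Complex.norm_exp]
    have : ((-(2*(Real.pi:ℂ)*Complex.I*n)) * β).re = 0 := by simp
    rw [this, Real.exp_zero]
  have h3 : ‖-(2*(Real.pi:ℂ)*Complex.I*n)‖ = 2*Real.pi*|(n:ℝ)| := by
    rw [norm_neg]
    rw [norm_mul, norm_mul, Complex.norm_I]
    simp [abs_of_pos Real.pi_pos]
  have h4 : ‖Complex.exp (-(2*Real.pi*Complex.I*n) * (Δ/2)) - 1‖ ≤ 2 := by
    have habs : ‖Complex.exp (-(2*Real.pi*Complex.I*n) * (Δ/2))‖ = 1 := by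
      rw [Complex.norm_exp]
      have : ((-(2*(Real.pi:ℂ)*Complex.I*n)) * ((Δ:ℂ)/2)).re = 0 := by simp
      rw [this, Real.exp_zero]
    calc ‖Complex.exp (-(2*Real.pi*Complex.I*n) * (Δ/2)) - 1‖
        = ‖Complex.exp (-(2*Real.pi*Complex.I*n) * (Δ/2)) - 1‖ := rfl
      _ ≤ ‖Complex.exp (-(2*Real.pi*Complex.I*n) * (Δ/2))‖ + ‖(1:ℂ)‖ := norm_sub_le _ _
      _ = 2 := by rw [habs, norm_one]; norm_num
  rw [h1, h2, h3, one_mul]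
  have hden : (2*Real.pi*|(n:ℝ)|)^2 = 4 * (Real.pi^2 * (n:ℝ)^2) := by
    rw [mul_pow, mul_pow, sq_abs]; ring
  rw [hden]
  rw [show Δ⁻¹ / (Real.pi^2 * (n:ℝ)^2) = Δ⁻¹ * (4 / (4 * (Real.pi^2 * (n:ℝ)^2))) by
    field_simp]
  have habs2 : ‖Complex.exp (-(2*Real.pi*Complex.I*n) * (Δ/2)) - 1‖^2 ≤ 4 := by
    calc ‖Complex.exp (-(2*Real.pi*Complex.I*n) * (Δ/2)) - 1‖^2 ≤ (2:ℝ)^2 := by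
          apply pow_le_pow_left₀ (norm_nonneg _) h4
      _ = 4 := by norm_num
  gcongr

lemma hassum_part {β Δ : ℝ} (hΔ : 0 < Δ) (hΔ1 : Δ < 1) (u : ℝ) (hu1 : β < u)
    (hu2 : u < β + Δ) :
    HasSum (fun n : ℤ => fcoef β Δ n * Complex.exp (2 * Real.pi * Complex.I * n * u))
      ((chi2 β Δ u : ℝ) : ℂ) := by
  haveI : Fact ((0:ℝ) < 1) := ⟨one_pos⟩
  set g : ℝ → ℂ := fun u => (chi2 β Δ u : ℂ) with hg
  have hper : g β = g (β + 1) := by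
    simp only [hg, chi2_eq hΔ, Complex.ofReal_inj]
    rw [show β - β = 0 by ring, min_eq_left (by linarith), max_self,
      max_eq_left (le_trans (min_le_right _ _) (by linarith))]
  have hgc : Continuous g := Complex.continuous_ofReal.comp (chi2_cont hΔ)
  set F : C(AddCircle (1:ℝ), ℂ) :=
    ⟨AddCircle.liftIco 1 β g, AddCircle.liftIco_continuous hper hgc.continuousOn⟩ with hF
  have hcoef : ∀ n : ℤ, fourierCoeff (⇑F) n = fcoef β Δ n := by
    intro n
    have h1 : fourierCoeff (⇑F) n = fourierCoeffOn (by linarith : β < β + 1) g n := by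
      rw [hF]
      exact fourierCoeff_liftIco_eq g n
    rw [h1, fourierCoeffOn_eq_integral]
    simp_rw [fourier_coe_apply]
    have hT1 : β + 1 - β = (1:ℝ) := by ring
    rw [hT1]
    rw [fcoef]
    simp only [Complex.ofReal_one, div_one, one_div, one_smul, smul_eq_mul]
    norm_num
    simp only [hg]
    exact intervalIntegral.integral_congr fun x hx => mul_comm _ _
  have hsummable : Summable (fourierCoeff (⇑F)) := by
    apply Summable.of_norm_bounded_eventually (g := fun n : ℤ => (Δ⁻¹ / Real.pi^2) * (1/(n:ℝ)^2))
    · exact (Real.summable_one_div_int_pow.mpr one_lt_two).mul_left _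
    · refine (Filter.eventually_cofinite_ne 0).mono fun n hn => ?_
      rw [hcoef n]
      calc ‖fcoef β Δ n‖ ≤ Δ⁻¹ / (Real.pi^2 * (n:ℝ)^2) := fcoef_bound2 hΔ hΔ1 hn
        _ = (Δ⁻¹ / Real.pi^2) * (1/(n:ℝ)^2) := by ring
  have hsum := has_pointwise_sum_fourier_series_of_summable hsummable ((u : ℝ) : AddCircle (1:ℝ))
  have hFu : F ((u : ℝ) : AddCircle (1:ℝ)) = ((chi2 β Δ u : ℝ) : ℂ) := by
    rw [hF]
    show AddCircle.liftIco 1 β g ↑u = _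
    rw [AddCircle.liftIco_coe_apply (by constructor <;> [linarith; linarith])]
  rw [hFu] at hsum
  refine hsum.congr_fun fun n => ?_
  rw [hcoef n, smul_eq_mul, fourier_coe_apply]
  norm_num

theorem stmt14 :
    (∀ β Δ : ℝ, 0 < Δ → Δ < 1 → fcoef β Δ 0 = ((Δ / 4 : ℝ) : ℂ)) ∧
    (∃ C : ℝ, 0 < C ∧ ∀ β Δ : ℝ, 0 < Δ → Δ < 1 → ∀ n : ℤ, n ≠ 0 →
      ((|n| : ℝ) ≤ Δ⁻¹ → ‖fcoef β Δ n‖ ≤ C * Δ) ∧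
      (Δ⁻¹ < (|n| : ℝ) → ‖fcoef β Δ n‖ ≤ C * Δ⁻¹ / (n : ℝ) ^ 2)) ∧
    (∀ β Δ : ℝ, 0 < Δ → Δ < 1 → ∀ u : ℝ, β < u → u < β + Δ →
      HasSum (fun n : ℤ => fcoef β Δ n * Complex.exp (2 * Real.pi * Complex.I * n * u))
        ((chi2 β Δ u : ℝ) : ℂ)) := by
  refine ⟨fun β Δ hΔ hΔ1 => fcoef_zero hΔ hΔ1,
    ⟨1, one_pos, fun β Δ hΔ hΔ1 n hn => ⟨fun _ => ?_, fun _ => ?_⟩⟩,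
    fun β Δ hΔ hΔ1 u hu1 hu2 => hassum_part hΔ hΔ1 u hu1 hu2⟩
  · calc ‖fcoef β Δ n‖ ≤ Δ / 4 := fcoef_bound1 hΔ hΔ1 n
      _ ≤ 1 * Δ := by linarith
  · have hn2 : (0:ℝ) < (n:ℝ)^2 := by
      have : (n:ℝ) ≠ 0 := by exact_mod_cast hn
      positivity
    calc ‖fcoef β Δ n‖ ≤ Δ⁻¹ / (Real.pi^2 * (n:ℝ)^2) := fcoef_bound2 hΔ hΔ1 hn
      _ ≤ Δ⁻¹ / (n:ℝ)^2 := by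
          apply div_le_div_of_nonneg_left (by positivity) hn2
          have hpi : (1:ℝ) ≤ Real.pi^2 := by nlinarith [Real.pi_gt_three]
          nlinarith [mul_le_mul_of_nonneg_right hpi hn2.le]
      _ = 1 * Δ⁻¹ / (n:ℝ)^2 := by ring
end
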